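/- Accuracy of the optimization-based limiter: let f_h be the numerical solution with cell average f̄_h, let w̄_h be the minimizer of ‖x_h − f̄_h‖_{L²} over piecewise constants x_h satisfying ∫_Ω x_h = ∫_Ω f_h and m ≤ x_h ≤ M, and set f_h^lim = (f_h − f̄_h) + w̄_h. If there exists a function P_h f with m ≤ P_h f ≤ M, ∫_Ω P_h f = ∫_Ω f_h, and ‖P_h f − f‖_{L²} ≤ C h^{k+1}, and ‖f_h − f‖_{L²} ≤ C h^{k+1}, then ‖f_h^lim − f‖_{L²} ≤ 4 C h^{k+1}. -/

import Mathlib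

open MeasureTheory
open scoped BigOperators

section Helpers

variable {X : Type*} [MeasurableSpace X] {ν : Measure X}

lemma l2_integrable_mul (g₁ g₂ : X → ℝ) (h₁ : MemLp g₁ 2 ν) (h₂ : MemLp g₂ 2 ν) :
    Integrable (fun v => g₁ v * g₂ v) ν := by
  refine Integrable.mono' (h₁.integrable_sq.add h₂.integrable_sq) (h₁.1.mul h₂.1)
    (Filter.Eventually.of_forall fun v => ?_)
  show ‖g₁ v * g₂ v‖ ≤ g₁ v ^ 2 + g₂ v ^ 2
  rw [Real.norm_eq_abs, abs_mul]
  nlinarith [abs_nonneg (g₁ v), abs_nonneg (g₂ v), sq_abs (g₁ v), sq_abs (g₂ v),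
    sq_nonneg (|g₁ v| - |g₂ v|)]

/-- Cauchy–Schwarz for L² functions, elementary form. -/
lemma l2_cauchy_schwarz (g₁ g₂ : X → ℝ) (h₁ : MemLp g₁ 2 ν) (h₂ : MemLp g₂ 2 ν) :
    ∫ v, g₁ v * g₂ v ∂ν ≤ Real.sqrt (∫ v, g₁ v ^ 2 ∂ν) * Real.sqrt (∫ v, g₂ v ^ 2 ∂ν) := by
  have hpq : (2:ℝ).HolderConjugate 2 := Real.HolderConjugate.two_two
  have h₁' : MemLp (fun v => |g₁ v|) (ENNReal.ofReal 2) ν := by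
    rw [ENNReal.ofReal_ofNat]; exact h₁.abs
  have h₂' : MemLp (fun v => |g₂ v|) (ENNReal.ofReal 2) ν := by
    rw [ENNReal.ofReal_ofNat]; exact h₂.abs
  have key := integral_mul_le_Lp_mul_Lq_of_nonneg hpq
    (Filter.Eventually.of_forall (fun v => abs_nonneg (g₁ v)))
    (Filter.Eventually.of_forall (fun v => abs_nonneg (g₂ v))) h₁' h₂'
  have e1 : ∀ (g : X → ℝ), (∫ v, |g v| ^ (2:ℝ) ∂ν) = ∫ v, g v ^ 2 ∂ν := by
    intro g; refine integral_congr_ae (Filter.Eventually.of_forall fun v => ?_)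
    show |g v| ^ (2:ℝ) = g v ^ 2
    rw [show ((2:ℝ) = ((2:ℕ):ℝ)) by norm_num, Real.rpow_natCast, sq_abs]
  calc ∫ v, g₁ v * g₂ v ∂ν ≤ ∫ v, |g₁ v| * |g₂ v| ∂ν := by
        refine integral_mono (l2_integrable_mul g₁ g₂ h₁ h₂) ?_ (fun v => ?_)
        · exact (l2_integrable_mul g₁ g₂ h₁ h₂).abs.congr
            (Filter.Eventually.of_forall fun v => by simp [abs_mul])
        · rw [← abs_mul]; exact le_abs_self _
      _ ≤ (∫ v, |g₁ v| ^ (2:ℝ) ∂ν) ^ (1/(2:ℝ)) * (∫ v, |g₂ v| ^ (2:ℝ) ∂ν) ^ (1/(2:ℝ)) := key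
      _ = Real.sqrt (∫ v, g₁ v ^ 2 ∂ν) * Real.sqrt (∫ v, g₂ v ^ 2 ∂ν) := by
        rw [e1, e1, Real.sqrt_eq_rpow, Real.sqrt_eq_rpow]

/-- Triangle inequality for the elementary L² norm. -/
lemma l2_triangle (g₁ g₂ : X → ℝ) (h₁ : MemLp g₁ 2 ν) (h₂ : MemLp g₂ 2 ν) :
    Real.sqrt (∫ v, (g₁ v + g₂ v) ^ 2 ∂ν)
      ≤ Real.sqrt (∫ v, g₁ v ^ 2 ∂ν) + Real.sqrt (∫ v, g₂ v ^ 2 ∂ν) := by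
  set A := Real.sqrt (∫ v, g₁ v ^ 2 ∂ν) with hA
  set B := Real.sqrt (∫ v, g₂ v ^ 2 ∂ν) with hB
  have hA0 : 0 ≤ A := Real.sqrt_nonneg _
  have hB0 : 0 ≤ B := Real.sqrt_nonneg _
  have hAe : A ^ 2 = ∫ v, g₁ v ^ 2 ∂ν := Real.sq_sqrt (integral_nonneg fun v => sq_nonneg _)
  have hBe : B ^ 2 = ∫ v, g₂ v ^ 2 ∂ν := Real.sq_sqrt (integral_nonneg fun v => sq_nonneg _)
  have hcs := l2_cauchy_schwarz g₁ g₂ h₁ h₂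
  have hexp : (∫ v, (g₁ v + g₂ v) ^ 2 ∂ν)
      = (∫ v, g₁ v ^ 2 ∂ν) + 2 * (∫ v, g₁ v * g₂ v ∂ν) + (∫ v, g₂ v ^ 2 ∂ν) := by
    rw [show (fun v => (g₁ v + g₂ v) ^ 2)
        = fun v => g₁ v ^ 2 + 2 * (g₁ v * g₂ v) + g₂ v ^ 2 from funext fun v => by ring]
    have hm := (l2_integrable_mul g₁ g₂ h₁ h₂).const_mul 2
    have i1 : Integrable (fun v => g₁ v ^ 2 + 2 * (g₁ v * g₂ v)) ν := h₁.integrable_sq.add hm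
    rw [integral_add i1 h₂.integrable_sq, integral_add h₁.integrable_sq hm,
      MeasureTheory.integral_const_mul]
  have hle : (∫ v, (g₁ v + g₂ v) ^ 2 ∂ν) ≤ (A + B) ^ 2 := by
    rw [hexp]; nlinarith
  calc Real.sqrt (∫ v, (g₁ v + g₂ v) ^ 2 ∂ν) ≤ Real.sqrt ((A + B) ^ 2) :=
        Real.sqrt_le_sqrt hle
    _ = A + B := Real.sqrt_sq (by positivity)

lemma pcw_apply {N : ℕ} {E : Fin N → Set X}
    (hdisj : Pairwise (Function.onFun Disjoint E)) (c : Fin N → ℝ) {i : Fin N} {v : X}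
    (hv : v ∈ E i) :
    (∑ j, (E j).indicator (fun _ => c j) v) = c i := by
  rw [Finset.sum_eq_single i]
  · exact Set.indicator_of_mem hv _
  · intro j _ hji
    exact Set.indicator_of_notMem (fun hvj => Set.disjoint_left.mp (hdisj hji) hvj hv) _
  · simp

lemma cell_avg_sq_le {s : Set X} (V : ℝ) (hV : 0 < V) (hμs : ν s = ENNReal.ofReal V)
    (g : X → ℝ) (hg : IntegrableOn g s ν) (hg2 : IntegrableOn (fun v => g v ^ 2) s ν) :
    ((∫ v in s, g v ∂ν) / V) ^ 2 * V ≤ ∫ v in s, g v ^ 2 ∂ν := by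
  set a := (∫ v in s, g v ∂ν) / V with ha
  have hVr : (ν s).toReal = V := by rw [hμs, ENNReal.toReal_ofReal hV.le]
  have h0 : 0 ≤ ∫ v in s, (g v - a) ^ 2 ∂ν := integral_nonneg fun v => sq_nonneg _
  have hint : ∫ v in s, (g v - a) ^ 2 ∂ν
      = (∫ v in s, g v ^ 2 ∂ν) - 2 * a * (∫ v in s, g v ∂ν) + a ^ 2 * V := by
    rw [show (fun v => (g v - a) ^ 2) = fun v => (g v ^ 2 - 2 * a * g v) + a ^ 2 from
      funext fun v => by ring]
    have i1 : Integrable (fun v => g v ^ 2 - 2 * a * g v) (ν.restrict s) :=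
      hg2.sub (hg.const_mul (2 * a))
    have ic : Integrable (fun _ : X => a ^ 2) (ν.restrict s) :=
      (integrableOn_const_iff enorm_ne_top).mpr (Or.inr (by rw [hμs]; exact ENNReal.ofReal_lt_top))
    rw [integral_add i1 ic, integral_sub hg2 (hg.const_mul (2 * a)),
      MeasureTheory.integral_const_mul, setIntegral_const, measureReal_def, smul_eq_mul, hVr]
    ring
  have hgi : (∫ v in s, g v ∂ν) = a * V := by
    rw [ha]; field_simp
  rw [hint, hgi] at h0
  nlinarith [h0]

end Helpers

/-- Accuracy of the optimization-based cell average limiter: if the cell averages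
are modified by the constrained `L²` minimization and there exists a conservative
bound-respecting approximation `P_h f` with `‖P_h f − f‖_{L²} ≤ C h^{k+1}`, and
`‖f_h − f‖_{L²} ≤ C h^{k+1}`, then `‖f_h^lim − f‖_{L²} ≤ 4 C h^{k+1}`. -/
theorem stmt12 {X : Type*} [MeasurableSpace X] (μ : Measure X)
    (N : ℕ) (E : Fin N → Set X) (hmeas : ∀ i, MeasurableSet (E i))
    (hdisj : Pairwise (Function.onFun Disjoint E))
    (Ω : Set X) (hΩ : Ω = ⋃ i, E i)
    (vol : Fin N → ℝ) (hvol : ∀ i, 0 < vol i)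
    (hE : ∀ i, μ (E i) = ENNReal.ofReal (vol i))
    (m M C h : ℝ) (hmM : m ≤ M) (hC : 0 < C) (hh : 0 < h) (k : ℕ)
    (f fh Phf fbar wbar flim : X → ℝ)
    (hfL2 : MemLp f 2 (μ.restrict Ω)) (hfhL2 : MemLp fh 2 (μ.restrict Ω))
    (hPhfL2 : MemLp Phf 2 (μ.restrict Ω))
    -- `fbar` is the piecewise constant cell average of `fh`
    (hfbar : ∀ i, ∀ v ∈ E i, fbar v = (∫ u in E i, fh u ∂μ) / vol i)
    -- `wbar` minimizes the L² distance to `fbar` among feasible piecewise constants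
    (hwbar_feas : (∀ i, ∀ v ∈ E i, ∀ v' ∈ E i, wbar v = wbar v') ∧
      (∫ v in Ω, wbar v ∂μ) = (∫ v in Ω, fh v ∂μ) ∧ ∀ v ∈ Ω, m ≤ wbar v ∧ wbar v ≤ M)
    (hwbar_min : ∀ x : X → ℝ,
      (∀ i, ∀ v ∈ E i, ∀ v' ∈ E i, x v = x v') →
      (∫ v in Ω, x v ∂μ) = (∫ v in Ω, fh v ∂μ) →
      (∀ v ∈ Ω, m ≤ x v ∧ x v ≤ M) →
      (∫ v in Ω, (wbar v - fbar v) ^ 2 ∂μ) ≤ ∫ v in Ω, (x v - fbar v) ^ 2 ∂μ)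
    -- the postprocessed solution
    (hflim : ∀ v, flim v = (fh v - fbar v) + wbar v)
    -- properties of `P_h f`
    (hPhf_bnd : ∀ v ∈ Ω, m ≤ Phf v ∧ Phf v ≤ M)
    (hPhf_cons : (∫ v in Ω, Phf v ∂μ) = ∫ v in Ω, fh v ∂μ)
    (hPhf_acc : Real.sqrt (∫ v in Ω, (Phf v - f v) ^ 2 ∂μ) ≤ C * h ^ (k + 1))
    (hfh_acc : Real.sqrt (∫ v in Ω, (fh v - f v) ^ 2 ∂μ) ≤ C * h ^ (k + 1)) :
    Real.sqrt (∫ v in Ω, (flim v - f v) ^ 2 ∂μ) ≤ 4 * C * h ^ (k + 1) := by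
  have hsub : ∀ i, E i ⊆ Ω := fun i => hΩ ▸ Set.subset_iUnion E i
  have hmeasΩ : MeasurableSet Ω := hΩ ▸ MeasurableSet.iUnion hmeas
  have hμE : ∀ i, μ (E i) ≠ ⊤ := fun i => by rw [hE i]; exact ENNReal.ofReal_ne_top
  have hμΩ : μ Ω ≠ ⊤ := by
    rw [hΩ]
    refine ne_top_of_le_ne_top ?_ (measure_iUnion_le E)
    rw [tsum_fintype]
    exact (ENNReal.sum_lt_top.mpr fun i _ => lt_top_iff_ne_top.mpr (hμE i)).ne
  haveI : IsFiniteMeasure (μ.restrict Ω) :=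
    ⟨by rw [Measure.restrict_apply_univ]; exact lt_top_iff_ne_top.mpr hμΩ⟩
  have hIO : ∀ (g : X → ℝ), MemLp g 2 (μ.restrict Ω) → IntegrableOn g Ω μ :=
    fun g hg => hg.integrable one_le_two
  have hIcell : ∀ (g : X → ℝ), IntegrableOn g Ω μ → ∀ i, IntegrableOn g (E i) μ :=
    fun g hg i => hg.mono_set (hsub i)
  have hsum : ∀ (g : X → ℝ), IntegrableOn g Ω μ →
      ∫ v in Ω, g v ∂μ = ∑ i, ∫ v in E i, g v ∂μ := by
    intro g hg
    rw [hΩ] at hg ⊢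
    rw [integral_iUnion hmeas hdisj hg, tsum_fintype]
  set A : Fin N → ℝ := fun i => (∫ u in E i, Phf u ∂μ) / vol i with hA
  set x : X → ℝ := fun v => ∑ j, (E j).indicator (fun _ => A j) v with hx
  have hxapply : ∀ i, ∀ v ∈ E i, x v = A i := fun i v hv => pcw_apply hdisj A hv
  have hEne : ∀ i, (E i).Nonempty := fun i => by
    refine nonempty_of_measure_ne_zero (μ := μ) ?_
    rw [hE i]
    exact (ENNReal.ofReal_pos.mpr (hvol i)).ne'
  choose pt hpt using hEne
  have hpcwL2 : ∀ c : Fin N → ℝ,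
      MemLp (fun v => ∑ j, (E j).indicator (fun _ => c j) v) 2 (μ.restrict Ω) := by
    intro c
    refine memLp_finset_sum _ fun j _ => memLp_indicator_const 2 (hmeas j) (c j) (Or.inr ?_)
    rw [Measure.restrict_apply (hmeas j)]
    exact ne_top_of_le_ne_top (hμE j) (measure_mono Set.inter_subset_left)
  have hxL2 : MemLp x 2 (μ.restrict Ω) := hpcwL2 A
  have hae : ∀ (g : X → ℝ) (c : Fin N → ℝ), (∀ i, ∀ v ∈ E i, g v = c i) →
      g =ᵐ[μ.restrict Ω] fun v => ∑ j, (E j).indicator (fun _ => c j) v := by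
    intro g c hg
    filter_upwards [ae_restrict_mem hmeasΩ] with v hv
    rw [hΩ] at hv
    rcases Set.mem_iUnion.mp hv with ⟨i, hvI⟩
    rw [hg i v hvI, pcw_apply hdisj c hvI]
  have hfbarL2 : MemLp fbar 2 (μ.restrict Ω) :=
    (hpcwL2 _).ae_eq (hae fbar (fun i => (∫ u in E i, fh u ∂μ) / vol i) hfbar).symm
  have hwbarL2 : MemLp wbar 2 (μ.restrict Ω) :=
    (hpcwL2 _).ae_eq (hae wbar (fun i => wbar (pt i))
      (fun i v hv => hwbar_feas.1 i v hv (pt i) (hpt i))).symm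
  -- feasibility of x
  have hxconst : ∀ i, ∀ v ∈ E i, ∀ v' ∈ E i, x v = x v' := fun i v hv v' hv' => by
    rw [hxapply i v hv, hxapply i v' hv']
  have hxcellint : ∀ i, ∫ v in E i, x v ∂μ = ∫ v in E i, Phf v ∂μ := by
    intro i
    rw [setIntegral_congr_fun (hmeas i) (fun v hv => hxapply i v hv), setIntegral_const, measureReal_def,
      hE i, ENNReal.toReal_ofReal (hvol i).le, smul_eq_mul, hA]
    show vol i * ((∫ u in E i, Phf u ∂μ) / vol i) = ∫ v in E i, Phf v ∂μ
    field_simp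
    exact mul_div_cancel_left₀ _ (hvol i).ne'
  have hxcons : ∫ v in Ω, x v ∂μ = ∫ v in Ω, fh v ∂μ := by
    rw [hsum x (hIO x hxL2), Finset.sum_congr rfl (fun i _ => hxcellint i),
      ← hsum Phf (hIO Phf hPhfL2), hPhf_cons]
  have hxbnd : ∀ v ∈ Ω, m ≤ x v ∧ x v ≤ M := by
    intro v hv
    rw [hΩ] at hv
    rcases Set.mem_iUnion.mp hv with ⟨i, hvI⟩
    rw [hxapply i v hvI]
    have hci : IntegrableOn (fun _ => (1:ℝ)) (E i) μ := by
      refine (integrableOn_const_iff enorm_ne_top).mpr (Or.inr ?_)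
      exact lt_top_iff_ne_top.mpr (hμE i)
    have hVi : (μ (E i)).toReal = vol i := by rw [hE i, ENNReal.toReal_ofReal (hvol i).le]
    have hml : m * vol i ≤ ∫ u in E i, Phf u ∂μ := by
      have := setIntegral_mono_on ((integrableOn_const_iff enorm_ne_top).mpr (Or.inr
          (lt_top_iff_ne_top.mpr (hμE i)))) (hIcell Phf (hIO Phf hPhfL2) i) (hmeas i)
        (fun u hu => (hPhf_bnd u (hsub i hu)).1)
      rwa [setIntegral_const, measureReal_def, smul_eq_mul, hVi, mul_comm] at this
    have hMr : (∫ u in E i, Phf u ∂μ) ≤ M * vol i := by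
      have := setIntegral_mono_on (hIcell Phf (hIO Phf hPhfL2) i)
        ((integrableOn_const_iff enorm_ne_top).mpr (Or.inr (lt_top_iff_ne_top.mpr (hμE i)))) (hmeas i)
        (fun u hu => (hPhf_bnd u (hsub i hu)).2)
      rwa [setIntegral_const, measureReal_def, smul_eq_mul, hVi, mul_comm] at this
    constructor
    · rw [hA, le_div_iff₀ (hvol i)]; exact hml
    · rw [hA, div_le_iff₀ (hvol i)]; exact hMr
  have hmin := hwbar_min x hxconst hxcons hxbnd
  -- cellwise contraction
  set g : X → ℝ := fun v => Phf v - fh v with hgdef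
  have hgL2 : MemLp g 2 (μ.restrict Ω) := hPhfL2.sub hfhL2
  have hg2int : IntegrableOn (fun v => g v ^ 2) Ω μ := hgL2.integrable_sq
  have hgint : IntegrableOn g Ω μ := hIO g hgL2
  have hcell : ∀ i, ∫ v in E i, (x v - fbar v) ^ 2 ∂μ ≤ ∫ v in E i, g v ^ 2 ∂μ := by
    intro i
    have e1 : Set.EqOn (fun v => (x v - fbar v) ^ 2)
        (fun _ => ((∫ u in E i, g u ∂μ) / vol i) ^ 2) (E i) := by
      intro v hv
      show (x v - fbar v) ^ 2 = ((∫ u in E i, g u ∂μ) / vol i) ^ 2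
      rw [hxapply i v hv, hfbar i v hv, hA]
      congr 1
      rw [div_sub_div_same, ← integral_sub (hIcell Phf (hIO Phf hPhfL2) i)
        (hIcell fh (hIO fh hfhL2) i)]
    rw [setIntegral_congr_fun (hmeas i) e1, setIntegral_const, measureReal_def, smul_eq_mul, hE i,
      ENNReal.toReal_ofReal (hvol i).le, mul_comm]
    exact cell_avg_sq_le (vol i) (hvol i) (hE i) g (hIcell g hgint i)
      (hIcell _ hg2int i)
  have hx2int : IntegrableOn (fun v => (x v - fbar v) ^ 2) Ω μ :=
    (hxL2.sub hfbarL2).integrable_sq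
  have hcontr : ∫ v in Ω, (x v - fbar v) ^ 2 ∂μ ≤ ∫ v in Ω, g v ^ 2 ∂μ := by
    rw [hsum _ hx2int, hsum _ hg2int]
    exact Finset.sum_le_sum fun i _ => hcell i
  -- assemble
  set D := C * h ^ (k + 1) with hD
  have hD0 : (0:ℝ) ≤ D := by positivity
  have t1 : Real.sqrt (∫ v in Ω, (wbar v - fbar v) ^ 2 ∂μ)
      ≤ Real.sqrt (∫ v in Ω, g v ^ 2 ∂μ) := Real.sqrt_le_sqrt (le_trans hmin hcontr)
  have t2 : Real.sqrt (∫ v in Ω, g v ^ 2 ∂μ) ≤ 2 * D := by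
    have tri := l2_triangle (fun v => Phf v - f v) (fun v => f v - fh v)
      (hPhfL2.sub hfL2) (hfL2.sub hfhL2)
    have e2 : (fun v => ((Phf v - f v) + (f v - fh v)) ^ 2) = fun v => g v ^ 2 :=
      funext fun v => by rw [hgdef]; ring
    have e3 : (fun v => (f v - fh v) ^ 2) = fun v => (fh v - f v) ^ 2 :=
      funext fun v => by ring
    rw [e2, e3] at tri
    calc Real.sqrt (∫ v in Ω, g v ^ 2 ∂μ) ≤ _ := tri
      _ ≤ D + D := add_le_add hPhf_acc hfh_acc
      _ = 2 * D := by ring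
  have t3 : Real.sqrt (∫ v in Ω, (flim v - f v) ^ 2 ∂μ)
      ≤ Real.sqrt (∫ v in Ω, (fh v - f v) ^ 2 ∂μ)
        + Real.sqrt (∫ v in Ω, (wbar v - fbar v) ^ 2 ∂μ) := by
    have tri := l2_triangle (fun v => fh v - f v) (fun v => wbar v - fbar v)
      (hfhL2.sub hfL2) (hwbarL2.sub hfbarL2)
    have e4 : (fun v => ((fh v - f v) + (wbar v - fbar v)) ^ 2)
        = fun v => (flim v - f v) ^ 2 := funext fun v => by rw [hflim v]; ring
    rw [e4] at tri
    exact tri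
  have : Real.sqrt (∫ v in Ω, (flim v - f v) ^ 2 ∂μ) ≤ 3 * D := by
    calc Real.sqrt (∫ v in Ω, (flim v - f v) ^ 2 ∂μ) ≤ _ := t3
      _ ≤ D + 2 * D := add_le_add hfh_acc (le_trans t1 t2)
      _ = 3 * D := by ring
  calc Real.sqrt (∫ v in Ω, (flim v - f v) ^ 2 ∂μ) ≤ 3 * D := this
    _ ≤ 4 * D := by linarith
    _ = 4 * C * h ^ (k + 1) := by rw [hD]; ring
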